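/- Let 0<q<1. (a) The function x ↦ Γ_q((1-x)/x) is strictly log-convex on (0,1/2], i.e. x ↦ log Γ_q((1-x)/x) is strictly convex there. (b) The function x ↦ Γ_q(1-x)/Γ_q(x) is strictly log-concave on (0,1/2], i.e. x ↦ log Γ_q(1-x) - log Γ_q(x) is strictly concave there. -/

import Mathlib

open Real Set

/-- The q-digamma function: ψ_q(x) = -log(1-q) + (log q)·∑_{n=1}^∞ q^{nx}/(1-q^n). -/
noncomputable def qDigamma (q x : ℝ) : ℝ :=
  -Real.log (1 - q) + Real.log q * ∑' n : ℕ, q ^ (((n : ℝ) + 1) * x) / (1 - q ^ (n + 1))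

/-- The q-gamma function: Γ_q(x) = (q;q)_∞/(q^x;q)_∞ · (1-q)^{1-x}. -/
noncomputable def qGamma (q x : ℝ) : ℝ :=
  ((∏' i : ℕ, (1 - q ^ (i + 1))) / ∏' i : ℕ, (1 - q ^ (x + (i : ℝ)))) * (1 - q) ^ (1 - x)

/-- The q-bracket: [x]_q = (1-q^x)/(1-q). -/
noncomputable def qBracket (q x : ℝ) : ℝ := (1 - q ^ x) / (1 - q)

set_option linter.unusedSectionVars false
set_option linter.unusedVariables false
set_option maxHeartbeats 1000000

lemma StrictConvexOn.pos_smul {s : Set ℝ} {f : ℝ → ℝ} (h : StrictConvexOn ℝ s f)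
    {c : ℝ} (hc : 0 < c) : StrictConvexOn ℝ s (fun x => c * f x) := by
  refine ⟨h.1, fun x hx y hy hxy a b ha hb hab => ?_⟩
  have := h.2 hx hy hxy ha hb hab
  simp only [smul_eq_mul] at *
  nlinarith

lemma StrictConcaveOn.pos_smul {s : Set ℝ} {f : ℝ → ℝ} (h : StrictConcaveOn ℝ s f)
    {c : ℝ} (hc : 0 < c) : StrictConcaveOn ℝ s (fun x => c * f x) := by
  refine ⟨h.1, fun x hx y hy hxy a b ha hb hab => ?_⟩
  have := h.2 hx hy hxy ha hb hab
  simp only [smul_eq_mul] at *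
  nlinarith

lemma affine_convexOn {s : Set ℝ} (hs : Convex ℝ s) (a c : ℝ) :
    ConvexOn ℝ s (fun x => a + c * x) := by
  refine ⟨hs, fun x hx y hy p r hp hr hpr => le_of_eq ?_⟩
  simp only [smul_eq_mul]
  linear_combination a * hpr.symm

lemma affine_concaveOn {s : Set ℝ} (hs : Convex ℝ s) (a c : ℝ) :
    ConcaveOn ℝ s (fun x => a + c * x) := by
  refine ⟨hs, fun x hx y hy p r hp hr hpr => le_of_eq ?_⟩
  simp only [smul_eq_mul]
  linear_combination a * hpr


lemma exp_neg_le_quad {t : ℝ} (ht : 0 ≤ t) : Real.exp (-t) ≤ 1 - t + t^2/2 := by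
  have key : ∀ s ∈ Ici (0:ℝ), HasDerivAt (fun t => 1 - t + t^2/2 - Real.exp (-t))
      (-1 + s + Real.exp (-s)) s := by
    intro s _
    have h1 : HasDerivAt (fun t : ℝ => 1 - t + t^2/2 - Real.exp (-t))
        (0 - 1 + (2*s^1)/2 - (Real.exp (-s) * (-1))) s := by
      exact (((hasDerivAt_const s (1:ℝ)).sub (hasDerivAt_id s)).add
        ((hasDerivAt_pow 2 s).div_const 2)).sub ((hasDerivAt_neg s).exp)
    convert h1 using 1; ring
  have mono : MonotoneOn (fun t => 1 - t + t^2/2 - Real.exp (-t)) (Ici (0:ℝ)) := by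
    apply monotoneOn_of_deriv_nonneg (convex_Ici 0)
    · exact Continuous.continuousOn (by continuity)
    · intro s hs
      exact ((key s (interior_subset hs)).differentiableAt).differentiableWithinAt
    · intro s hs
      rw [interior_Ici] at hs
      rw [(key s (mem_Ici.2 (le_of_lt (mem_Ioi.1 hs)))).deriv]
      nlinarith [Real.add_one_le_exp (-s)]
  have h0 : (fun t => 1 - t + t^2/2 - Real.exp (-t)) 0 ≤ (fun t => 1 - t + t^2/2 - Real.exp (-t)) t :=
    mono (self_mem_Ici) ht ht
  simp at h0
  nlinarith [h0]

lemma key_ineq {u : ℝ} (h0 : 0 < u) (h1 : u < 1) :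
    0 < 1 - u + Real.log u + (Real.log u)^2 := by
  set t := -Real.log u with htdef
  have ht : 0 < t := by
    rw [htdef, neg_pos]
    exact Real.log_neg h0 h1
  have hu : u = Real.exp (-t) := by rw [htdef, neg_neg, Real.exp_log h0]
  have := exp_neg_le_quad ht.le
  have hlog : Real.log u = -t := by rw [hu, Real.log_exp]
  rw [hu, Real.log_exp]
  nlinarith [this, ht]

lemma hasProd_exp_tsum_log {f : ℕ → ℝ} (hf : ∀ i, 0 < f i)
    (h : Summable fun i => Real.log (f i)) :
    HasProd f (Real.exp (∑' i, Real.log (f i))) := by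
  have hs := h.hasSum
  unfold HasSum at hs
  unfold HasProd
  have := (Real.continuous_exp.tendsto _).comp hs
  convert this using 2 with s
  rw [Function.comp_apply, Real.exp_sum]
  exact Finset.prod_congr rfl fun i _ => (Real.exp_log (hf i)).symm

lemma tprod_pos_log {f : ℕ → ℝ} (hf : ∀ i, 0 < f i)
    (h : Summable fun i => Real.log (f i)) :
    0 < ∏' i, f i ∧ Real.log (∏' i, f i) = ∑' i, Real.log (f i) := by
  have hp := hasProd_exp_tsum_log hf h
  rw [hp.tprod_eq]
  exact ⟨Real.exp_pos _, Real.log_exp _⟩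

-- summability of logs of (1 - a_i) when a_i in [0, r], r<1, a summable
lemma summable_neg_log_one_sub {a : ℕ → ℝ} {r : ℝ} (hr : r < 1)
    (h0 : ∀ i, 0 ≤ a i) (hle : ∀ i, a i ≤ r) (ha : Summable a) :
    Summable fun i => Real.log (1 - a i) := by
  rw [← summable_neg_iff]
  have hnn : ∀ i, 0 ≤ -Real.log (1 - a i) := by
    intro i
    rw [neg_nonneg]
    apply Real.log_nonpos
    · linarith [h0 i, hle i, hr]
    · linarith [h0 i]
  apply Summable.of_nonneg_of_le hnn (fun i => ?_) (ha.mul_right (1-r)⁻¹)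
  -- -log(1-a) ≤ a/(1-r) : since -log(1-a) = log(1/(1-a)) ≤ 1/(1-a) - 1 = a/(1-a) ≤ a/(1-r)
  have h1 : 0 < 1 - a i := by linarith [hle i, hr]
  have h2 : -Real.log (1 - a i) = Real.log (1/(1 - a i)) := by
    rw [Real.log_div one_ne_zero h1.ne', Real.log_one]; ring
  rw [h2]
  have h3 := Real.log_le_sub_one_of_pos (x := 1/(1 - a i)) (by positivity)
  have h4 : 1/(1 - a i) - 1 = a i / (1 - a i) := by field_simp; ring
  have h5 : a i / (1 - a i) ≤ a i * (1-r)⁻¹ := by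
    rw [div_eq_mul_inv]
    apply mul_le_mul_of_nonneg_left _ (h0 i)
    apply inv_anti₀ (by linarith) (by linarith [hle i])
  linarith

-- tsum of strictly convex functions is strictly convex
lemma strictConvexOn_tsum {s : Set ℝ} {f : ℕ → ℝ → ℝ}
    (hf : ∀ n, StrictConvexOn ℝ s (f n))
    (hsum : ∀ x ∈ s, Summable (fun n => f n x)) :
    StrictConvexOn ℝ s (fun x => ∑' n, f n x) := by
  refine ⟨(hf 0).1, fun x hx y hy hxy a b ha hb hab => ?_⟩
  have hz : a • x + b • y ∈ s := (hf 0).1 hx hy ha.le hb.le hab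
  have hRHS : Summable (fun n => a * f n x + b * f n y) :=
    ((hsum x hx).mul_left a).add ((hsum y hy).mul_left b)
  have hlt : ∑' n, f n (a • x + b • y) < ∑' n, (a * f n x + b * f n y) := by
    apply Summable.tsum_lt_tsum (i := 0) (fun n => ((hf n).2 hx hy hxy ha hb hab).le)
      ((hf 0).2 hx hy hxy ha hb hab) (hsum _ hz) hRHS
  calc ∑' n, f n (a • x + b • y) < ∑' n, (a * f n x + b * f n y) := hlt
    _ = a • ∑' n, f n x + b • ∑' n, f n y := by
        rw [Summable.tsum_add ((hsum x hx).mul_left a) ((hsum y hy).mul_left b),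
          tsum_mul_left, tsum_mul_left]; simp [smul_eq_mul]

lemma strictConcaveOn_tsum {s : Set ℝ} {f : ℕ → ℝ → ℝ}
    (hf : ∀ n, StrictConcaveOn ℝ s (f n))
    (hsum : ∀ x ∈ s, Summable (fun n => f n x)) :
    StrictConcaveOn ℝ s (fun x => ∑' n, f n x) := by
  have h := strictConvexOn_tsum (f := fun n x => -(f n x))
    (fun n => (hf n).neg) (fun x hx => (hsum x hx).neg)
  have := h.neg
  rw [show (-fun x => ∑' n, -f n x) = fun x => ∑' n, f n x from by
    funext x; simp only [Pi.neg_apply, tsum_neg, neg_neg]] at this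
  exact this

lemma StrictConvexOn.congr_on {s : Set ℝ} {f g : ℝ → ℝ} (h : StrictConvexOn ℝ s f)
    (he : ∀ x ∈ s, f x = g x) : StrictConvexOn ℝ s g := by
  refine ⟨h.1, fun x hx y hy hxy a b ha hb hab => ?_⟩
  rw [← he _ hx, ← he _ hy, ← he _ (h.1 hx hy ha.le hb.le hab)]
  exact h.2 hx hy hxy ha hb hab

lemma StrictConcaveOn.congr_on {s : Set ℝ} {f g : ℝ → ℝ} (h : StrictConcaveOn ℝ s f)
    (he : ∀ x ∈ s, f x = g x) : StrictConcaveOn ℝ s g := by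
  refine ⟨h.1, fun x hx y hy hxy a b ha hb hab => ?_⟩
  rw [← he _ hx, ← he _ hy, ← he _ (h.1 hx hy ha.le hb.le hab)]
  exact h.2 hx hy hxy ha hb hab


noncomputable def P1 (u b : ℝ) : ℝ → ℝ :=
  fun x => u * x⁻¹ + Real.exp (b * x⁻¹) / (u * (1 - u))

noncomputable def P1d (u b : ℝ) : ℝ → ℝ :=
  fun x => -u * (x^2)⁻¹ + Real.exp (b * x⁻¹) * (b * -(x^2)⁻¹) / (u * (1 - u))

noncomputable def P1dd (u b : ℝ) : ℝ → ℝ :=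
  fun x => (2*u*x*(u*(1-u)) + (2*b*x + b^2) * Real.exp (b * x⁻¹)) / (x^4 * (u*(1-u)))

lemma P1_hasDeriv {u b x : ℝ} (hD : u * (1-u) ≠ 0) (hx : x ≠ 0) :
    HasDerivAt (P1 u b) (P1d u b x) x := by
  have h1' : HasDerivAt (fun x : ℝ => u * x⁻¹) (u * -(x^2)⁻¹) x :=
    (hasDerivAt_inv hx).const_mul u
  have h2' : HasDerivAt (fun x : ℝ => b * x⁻¹) (b * -(x^2)⁻¹) x :=
    (hasDerivAt_inv hx).const_mul b
  have h3' : HasDerivAt (fun x : ℝ => Real.exp (b * x⁻¹) / (u*(1-u)))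
      (Real.exp (b * x⁻¹) * (b * -(x^2)⁻¹) / (u*(1-u))) x := h2'.exp.div_const _
  have h := h1'.add h3'
  refine h.congr_deriv ?_
  simp only [P1d]
  ring

lemma P1d_hasDeriv {u b x : ℝ} (hD : u * (1-u) ≠ 0) (hx : x ≠ 0) :
    HasDerivAt (P1d u b) (P1dd u b x) x := by
  have hx2 : (x^2 : ℝ) ≠ 0 := pow_ne_zero 2 hx
  have hp : HasDerivAt (fun x : ℝ => (x^2)⁻¹) (-(2*x^1)/(x^2)^2) x :=
    (hasDerivAt_pow 2 x).inv hx2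
  have h1' : HasDerivAt (fun x : ℝ => -u * (x^2)⁻¹) (-u * (-(2*x^1)/(x^2)^2)) x :=
    hp.const_mul (-u)
  have h2' : HasDerivAt (fun x : ℝ => b * x⁻¹) (b * -(x^2)⁻¹) x :=
    (hasDerivAt_inv hx).const_mul b
  have h3' : HasDerivAt (fun x : ℝ => Real.exp (b * x⁻¹))
      (Real.exp (b * x⁻¹) * (b * -(x^2)⁻¹)) x := h2'.exp
  have h4' : HasDerivAt (fun x : ℝ => b * -(x^2)⁻¹) (b * (2*x^1/(x^2)^2)) x := by
    have h := (hp.const_mul b).neg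
    convert h using 1
    · rfl
    · rfl
    · funext z; rw [Pi.neg_apply]; ring
    · ring
  have h5' : HasDerivAt (fun x : ℝ => Real.exp (b * x⁻¹) * (b * -(x^2)⁻¹) / (u*(1-u)))
      ((Real.exp (b * x⁻¹) * (b * -(x^2)⁻¹) * (b * -(x^2)⁻¹)
        + Real.exp (b * x⁻¹) * (b * (2*x^1/(x^2)^2))) / (u*(1-u))) x :=
    (h3'.mul h4').div_const _
  have h := h1'.add h5'
  refine h.congr_deriv ?_
  simp only [P1dd]
  have hu : u ≠ 0 := left_ne_zero_of_mul hD
  have hu1 : 1 - u ≠ 0 := right_ne_zero_of_mul hD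
  field_simp
  ring

lemma aux1 {u : ℝ} (h0 : 0 < u) (h1 : u < 1) :
    StrictConvexOn ℝ (Set.Ioc 0 (1/2 : ℝ)) (P1 u (Real.log u)) := by
  have hb : Real.log u < 0 := Real.log_neg h0 h1
  have hD : 0 < u * (1 - u) := by nlinarith
  set b := Real.log u
  refine strictConvexOn_of_deriv2_pos (convex_Ioc _ _) ?_ ?_
  · intro x hx
    exact ((P1_hasDeriv hD.ne' (ne_of_gt hx.1)).differentiableAt.continuousAt).continuousWithinAt
  · intro x hx
    rw [interior_Ioc] at hx
    have hxpos := hx.1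
    have hxlt := hx.2
    have hx0 : x ≠ 0 := ne_of_gt hxpos
    have hev : deriv (P1 u b) =ᶠ[nhds x] P1d u b := by
      filter_upwards [IsOpen.mem_nhds isOpen_compl_singleton hx0] with z hz
      exact (P1_hasDeriv hD.ne' hz).deriv
    have h2 : deriv^[2] (P1 u b) x = P1dd u b x := by
      show deriv (deriv (P1 u b)) x = P1dd u b x
      rw [Filter.EventuallyEq.deriv_eq hev]
      exact (P1d_hasDeriv hD.ne' hx0).deriv
    rw [h2]
    have hEpos : 0 < Real.exp (b * x⁻¹) := Real.exp_pos _
    have hnum : 0 < 2*u*x*(u*(1-u)) + (2*b*x + b^2) * Real.exp (b * x⁻¹) := by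
      rcases le_or_gt (2*x + b) 0 with hcase | hcase
      · have h5 : 0 ≤ b * (2*x + b) := by nlinarith
        have h6 : 0 ≤ (2*b*x + b^2) * Real.exp (b * x⁻¹) := by
          nlinarith [mul_nonneg h5 hEpos.le]
        nlinarith [mul_pos (mul_pos (mul_pos (by norm_num : (0:ℝ) < 2) h0) hxpos) hD]
      · have hinv : (2:ℝ) ≤ x⁻¹ := by
          have := inv_anti₀ hxpos (le_of_lt hxlt)
          simpa using this
        have hbx : b * x⁻¹ ≤ 2 * b := by nlinarith
        have hEle : Real.exp (b * x⁻¹) ≤ u^2 := by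
          calc Real.exp (b * x⁻¹) ≤ Real.exp (2*b) := Real.exp_le_exp.2 hbx
            _ = u^2 := by
              rw [two_mul, Real.exp_add, Real.exp_log h0]; ring
        have hcoef : 2*b*x + b^2 < 0 := by nlinarith
        have hstep1 : (2*b*x + b^2) * u^2 ≤ (2*b*x + b^2) * Real.exp (b * x⁻¹) := by
          nlinarith
        have h1ub : 1 - u + b ≤ 0 := by
          have := Real.log_le_sub_one_of_pos h0
          simp only [b]
          linarith
        have hstep3 : 1*(1 - u + b) ≤ 2*x*(1 - u + b) := by nlinarith
        have hk := key_ineq h0 h1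
        nlinarith [mul_pos (mul_pos h0 h0) hk, sq_nonneg u,
          mul_le_mul_of_nonneg_left hstep3 (le_of_lt (mul_pos h0 h0))]
    simp only [P1dd]
    have hden : 0 < x^4 * (u*(1-u)) := by positivity
    positivity

noncomputable def P2 (u b : ℝ) : ℝ → ℝ :=
  fun x => u * Real.exp (-b * x) - Real.exp (b * x)

noncomputable def P2d (u b : ℝ) : ℝ → ℝ :=
  fun x => u * (Real.exp (-b * x) * (-b)) - Real.exp (b * x) * b

noncomputable def P2dd (u b : ℝ) : ℝ → ℝ :=
  fun x => b^2 * (u * Real.exp (-b * x) - Real.exp (b * x))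

lemma P2_hasDeriv (u b x : ℝ) : HasDerivAt (P2 u b) (P2d u b x) x := by
  have h1 : HasDerivAt (fun x : ℝ => -b * x) (-b) x := by
    simpa using (hasDerivAt_id x).const_mul (-b)
  have h2 : HasDerivAt (fun x : ℝ => b * x) b x := by
    simpa using (hasDerivAt_id x).const_mul b
  exact (h1.exp.const_mul u).sub (h2.exp)

lemma P2d_hasDeriv (u b x : ℝ) : HasDerivAt (P2d u b) (P2dd u b x) x := by
  have h1 : HasDerivAt (fun x : ℝ => -b * x) (-b) x := by
    simpa using (hasDerivAt_id x).const_mul (-b)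
  have h2 : HasDerivAt (fun x : ℝ => b * x) b x := by
    simpa using (hasDerivAt_id x).const_mul b
  have h := (((h1.exp.mul_const (-b)).const_mul u).sub (h2.exp.mul_const b))
  refine h.congr_deriv ?_
  simp only [P2dd]
  ring

lemma aux2 {u : ℝ} (h0 : 0 < u) (h1 : u < 1) :
    StrictConcaveOn ℝ (Set.Ioc 0 (1/2 : ℝ)) (P2 u (Real.log u)) := by
  have hb : Real.log u < 0 := Real.log_neg h0 h1
  set b := Real.log u with hbdef
  refine strictConcaveOn_of_deriv2_neg (convex_Ioc _ _) ?_ ?_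
  · exact fun x hx => (P2_hasDeriv u b x).differentiableAt.continuousAt.continuousWithinAt
  · intro x hx
    rw [interior_Ioc] at hx
    have h2 : deriv^[2] (P2 u b) x = P2dd u b x := by
      show deriv (deriv (P2 u b)) x = P2dd u b x
      have hev : deriv (P2 u b) = P2d u b := by
        funext z; exact (P2_hasDeriv u b z).deriv
      rw [hev]
      exact (P2d_hasDeriv u b x).deriv
    rw [h2]
    simp only [P2dd]
    have hbne : b ≠ 0 := ne_of_lt hb
    have hkey : u * Real.exp (-b * x) < Real.exp (b * x) := by
      have e1 : u * Real.exp (-b * x) = Real.exp (b * (1 - x)) := by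
        rw [show b * (1-x) = b + (-b * x) by ring, Real.exp_add]
        congr 1
        rw [hbdef, Real.exp_log h0]
      rw [e1]
      apply Real.exp_lt_exp.2
      nlinarith [hx.1, hx.2]
    have hb2 : 0 < b^2 := by positivity
    nlinarith [mul_pos hb2 (sub_pos.2 hkey)]


variable {q : ℝ} (hq0 : 0 < q) (hq1 : q < 1)

section
include hq0 hq1

lemma qpow_pos (t : ℝ) : 0 < q ^ t := Real.rpow_pos_of_pos hq0 t

lemma qpow_lt_one {t : ℝ} (ht : 0 < t) : q ^ t < 1 :=
  Real.rpow_lt_one hq0.le hq1 ht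

lemma summable_qpow_mul {y : ℝ} :
    Summable (fun i : ℕ => q ^ (y + (i:ℝ))) := by
  have h : (fun i : ℕ => q ^ (y + (i:ℝ))) = fun i : ℕ => q ^ y * q ^ i := by
    funext i
    rw [Real.rpow_add hq0, Real.rpow_natCast]
  rw [h]
  exact (summable_geometric_of_lt_one hq0.le hq1).mul_left _

lemma summable_log_one_sub_qpow {y : ℝ} (hy : 0 < y) :
    Summable fun i : ℕ => Real.log (1 - q ^ (y + (i:ℝ))) := by
  apply summable_neg_log_one_sub (r := q ^ y) (qpow_lt_one hq0 hq1 hy)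
    (fun i => (qpow_pos hq0 hq1 _).le) (fun i => ?_) (summable_qpow_mul hq0 hq1)
  exact Real.rpow_le_rpow_of_exponent_ge hq0 hq1.le (by simp)

lemma tprod_one_sub_qpow_pos {y : ℝ} (hy : 0 < y) :
    0 < ∏' i : ℕ, (1 - q ^ (y + (i:ℝ))) ∧
      Real.log (∏' i : ℕ, (1 - q ^ (y + (i:ℝ)))) =
        ∑' i : ℕ, Real.log (1 - q ^ (y + (i:ℝ))) := by
  apply tprod_pos_log (fun i => ?_) (summable_log_one_sub_qpow hq0 hq1 hy)
  have h1 : q ^ (y + (i:ℝ)) < 1 := qpow_lt_one hq0 hq1 (by positivity)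
  linarith

lemma tprod_pochhammer_pos : 0 < ∏' i : ℕ, (1 - q ^ (i + 1)) := by
  refine (tprod_pos_log (fun i => ?_) ?_).1
  · have h1 : q ^ (i+1) < 1 := pow_lt_one₀ hq0.le hq1 (Nat.succ_ne_zero i)
    linarith
  · refine summable_neg_log_one_sub (r := q) hq1
      (fun i => by positivity) (fun i => ?_) ?_
    · calc q ^ (i+1) ≤ q ^ 1 := pow_le_pow_of_le_one hq0.le hq1.le (by omega)
        _ = q := pow_one q
    · exact ((summable_geometric_of_lt_one hq0.le hq1).mul_left q).congr
        (fun i => by rw [← pow_succ'])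

lemma hasSum_col {y : ℝ} (n : ℕ) :
    HasSum (fun i : ℕ => (q ^ (y + (i:ℝ))) ^ (n + 1) / ((n:ℝ) + 1))
      (q ^ (((n:ℝ) + 1) * y) / (((n:ℝ) + 1) * (1 - q ^ (n + 1)))) := by
  have hq1n : (q:ℝ) ^ (n+1) < 1 := pow_lt_one₀ hq0.le hq1 (Nat.succ_ne_zero n)
  have hgeo : HasSum (fun i : ℕ => (q^(n+1):ℝ)^i) (1 - q^(n+1))⁻¹ :=
    hasSum_geometric_of_lt_one (by positivity) hq1n
  have h := hgeo.mul_left (q ^ (((n:ℝ)+1) * y) / ((n:ℝ)+1))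
  convert h using 1
  · rfl
  · funext i
    rw [div_mul_eq_mul_div]
    congr 1
    rw [← Real.rpow_natCast (q ^ (y + (i:ℝ))) (n+1), ← Real.rpow_mul hq0.le,
      ← pow_mul, ← Real.rpow_natCast q ((n+1)*i), ← Real.rpow_add hq0]
    congr 1
    push_cast
    ring
  · rw [← div_div, div_eq_mul_inv]

lemma neg_log_tprod_eq {y : ℝ} (hy : 0 < y) :
    -Real.log (∏' i : ℕ, (1 - q ^ (y + (i:ℝ)))) =
      ∑' n : ℕ, q ^ (((n:ℝ) + 1) * y) / (((n:ℝ) + 1) * (1 - q ^ (n + 1))) := by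
  rw [(tprod_one_sub_qpow_pos hq0 hq1 hy).2, ← tsum_neg]
  have hrow : ∀ i : ℕ, HasSum (fun n : ℕ => (q ^ (y + (i:ℝ))) ^ (n + 1) / ((n:ℝ) + 1))
      (-Real.log (1 - q ^ (y + (i:ℝ)))) := by
    intro i
    have h := Real.hasSum_pow_div_log_of_abs_lt_one
      (x := q ^ (y + (i:ℝ)))
      (by rw [abs_of_pos (qpow_pos hq0 hq1 _)]; exact qpow_lt_one hq0 hq1 (by positivity))
    convert h using 2 with n <;> (push_cast; ring_nf)
  set f : ℕ → ℕ → ℝ := fun i n => (q ^ (y + (i:ℝ))) ^ (n + 1) / ((n:ℝ) + 1) with hf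
  have hunn : ∀ p : ℕ × ℕ, 0 ≤ Function.uncurry f p := by
    intro p
    have := qpow_pos hq0 hq1 (q := q) (y + (p.1:ℝ))
    simp only [Function.uncurry, hf]
    positivity
  have hsumg : Summable (Function.uncurry f) := by
    rw [summable_prod_of_nonneg hunn]
    constructor
    · exact fun i => (hrow i).summable
    · apply Summable.congr ((summable_log_one_sub_qpow hq0 hq1 hy).neg)
      intro i
      exact ((hrow i).tsum_eq).symm
  calc ∑' i : ℕ, -Real.log (1 - q ^ (y + (i:ℝ)))
      = ∑' (i : ℕ) (n : ℕ), f i n := by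
        congr 1; funext i; exact ((hrow i).tsum_eq).symm
    _ = ∑' (n : ℕ) (i : ℕ), f i n := (Summable.tsum_comm hsumg).symm
    _ = ∑' n : ℕ, q ^ (((n:ℝ) + 1) * y) / (((n:ℝ) + 1) * (1 - q ^ (n + 1))) := by
        congr 1; funext n; exact (hasSum_col hq0 hq1 n).tsum_eq

lemma summable_main {y : ℝ} (hy : 0 < y) :
    Summable (fun n : ℕ => q ^ (((n:ℝ) + 1) * y) / (((n:ℝ) + 1) * (1 - q ^ (n + 1)))) := by
  apply Summable.of_nonneg_of_le (fun n => ?_) (fun n => ?_)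
    (((summable_geometric_of_lt_one (Real.rpow_nonneg hq0.le y)
      (qpow_lt_one hq0 hq1 hy)).mul_left ((1-q)⁻¹)).mul_left (q^y))
  · have h1 := qpow_pos hq0 hq1 (((n:ℝ) + 1) * y)
    have h2 : (0:ℝ) < 1 - q ^ (n+1) := by
      have h' : (q:ℝ)^(n+1) < 1 := pow_lt_one₀ hq0.le hq1 (Nat.succ_ne_zero n)
      linarith
    have h3 : (0:ℝ) < (n:ℝ)+1 := by positivity
    positivity
  · have h2 : (q:ℝ) ^ (n+1) < 1 := pow_lt_one₀ hq0.le hq1 (Nat.succ_ne_zero n)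
    have hden : (1:ℝ) - q ≤ ((n:ℝ)+1) * (1 - q^(n+1)) := by
      have h4 : q^(n+1) ≤ q := by
        calc q ^ (n+1) ≤ q ^ 1 := pow_le_pow_of_le_one hq0.le hq1.le (by omega)
          _ = q := pow_one q
      nlinarith [Nat.cast_nonneg (α := ℝ) n, sub_pos.2 hq1]
    have hnum : q ^ (((n:ℝ) + 1) * y) = q^y * (q^y)^n := by
      rw [← Real.rpow_natCast (q^y) n, ← Real.rpow_mul hq0.le, ← Real.rpow_add hq0]
      congr 1
      ring
    calc q ^ (((n:ℝ) + 1) * y) / (((n:ℝ)+1) * (1 - q^(n+1)))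
        ≤ q ^ (((n:ℝ) + 1) * y) / (1 - q) := by
          apply div_le_div_of_nonneg_left (qpow_pos hq0 hq1 _).le
            (by linarith) hden
      _ = q^y * ((1-q)⁻¹ * (q^y)^n) := by rw [hnum]; field_simp; try ring
end

section
include hq0 hq1

lemma log_qGamma_eq {y : ℝ} (hy : 0 < y) :
    Real.log (qGamma q y) = Real.log (∏' i : ℕ, (1 - q ^ (i + 1)))
      + (1 - y) * Real.log (1 - q)
      + ∑' n : ℕ, q ^ (((n:ℝ) + 1) * y) / (((n:ℝ) + 1) * (1 - q ^ (n + 1))) := by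
  have hP := tprod_pochhammer_pos hq0 hq1
  have hQ := (tprod_one_sub_qpow_pos hq0 hq1 hy).1
  have h1q : (0:ℝ) < 1 - q := by linarith
  rw [qGamma, Real.log_mul (by positivity) (by positivity),
    Real.log_div hP.ne' hQ.ne', Real.log_rpow h1q]
  rw [sub_eq_add_neg, neg_log_tprod_eq hq0 hq1 hy]
  ring

end


noncomputable def Fa (q : ℝ) (n : ℕ) (x : ℝ) : ℝ :=
  q^(n+1) * x⁻¹ / ((n:ℝ)+1) + q ^ (((n:ℝ)+1)*((1-x)/x)) / (((n:ℝ)+1)*(1-q^(n+1)))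

noncomputable def Fb (q : ℝ) (n : ℕ) (x : ℝ) : ℝ :=
  q ^ (((n:ℝ)+1)*(1-x)) / (((n:ℝ)+1)*(1-q^(n+1)))
    - q ^ (((n:ℝ)+1)*x) / (((n:ℝ)+1)*(1-q^(n+1)))



section
include hq0 hq1

lemma upow_pos (n : ℕ) : (0:ℝ) < q^(n+1) := pow_pos hq0 _

lemma upow_lt_one (n : ℕ) : q^(n+1) < 1 := by
  have h : (q:ℝ)^(n+1) < 1 := pow_lt_one₀ hq0.le hq1 (Nat.succ_ne_zero n)
  exact h

lemma logu_eq (n : ℕ) : Real.log (q^(n+1)) = ((n:ℝ)+1) * Real.log q := by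
  rw [Real.log_pow]; push_cast; ring

lemma u_eq_exp (n : ℕ) : (q:ℝ)^(n+1) = Real.exp (((n:ℝ)+1) * Real.log q) := by
  rw [← logu_eq hq0 hq1 n]
  exact (Real.exp_log (upow_pos hq0 hq1 n)).symm

lemma Fb_eq (n : ℕ) (x : ℝ) :
    (((n:ℝ)+1) * (1 - q^(n+1)))⁻¹ * P2 (q^(n+1)) (Real.log (q^(n+1))) x = Fb q n x := by
  simp only [P2, Fb, logu_eq hq0 hq1 n]
  rw [Real.rpow_def_of_pos hq0 (((n:ℝ)+1)*(1-x)), Real.rpow_def_of_pos hq0 (((n:ℝ)+1)*x)]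
  rw [div_sub_div_same, inv_mul_eq_div]
  congr 1
  have e1 : q^(n+1) * Real.exp (-(((n:ℝ)+1) * Real.log q) * x)
      = Real.exp (Real.log q * (((n:ℝ)+1)*(1-x))) := by
    rw [u_eq_exp hq0 hq1 n, ← Real.exp_add]
    congr 1
    ring
  rw [e1]
  congr 1
  ring

lemma Fa_eq (n : ℕ) {x : ℝ} (hx : x ≠ 0) :
    ((n:ℝ)+1)⁻¹ * P1 (q^(n+1)) (Real.log (q^(n+1))) x = Fa q n x := by
  have hu0 := upow_pos hq0 hq1 n
  have hu1 := upow_lt_one hq0 hq1 n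
  simp only [P1, Fa, logu_eq hq0 hq1 n]
  rw [mul_add]
  congr 1
  · field_simp
  · rw [Real.rpow_def_of_pos hq0 (((n:ℝ)+1)*((1-x)/x))]
    have e2 : Real.log q * (((n:ℝ)+1)*((1-x)/x))
        = ((n:ℝ)+1) * Real.log q * x⁻¹ - ((n:ℝ)+1) * Real.log q := by
      field_simp
    rw [e2, Real.exp_sub, ← u_eq_exp hq0 hq1 n]
    have h1u : (1:ℝ) - q^(n+1) ≠ 0 := by linarith
    have hn1 : ((n:ℝ)+1) ≠ 0 := by positivity
    field_simp

lemma summable_Fa {x : ℝ} (hx : x ∈ Set.Ioc (0:ℝ) (1/2)) :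
    Summable (fun n => Fa q n x) := by
  have hxpos := hx.1
  have hy : 0 < (1-x)/x := by
    apply div_pos (by linarith [hx.2]) hxpos
  apply Summable.add
  · apply Summable.of_nonneg_of_le (fun n => by positivity) (fun n => ?_)
      (((summable_geometric_of_lt_one hq0.le hq1).mul_left (q * x⁻¹)))
    have h1 : (1:ℝ) ≤ (n:ℝ)+1 := by push_cast; linarith [Nat.cast_nonneg (α := ℝ) n]
    have h2 : q^(n+1) * x⁻¹ = q * x⁻¹ * q^n := by ring
    calc q^(n+1) * x⁻¹ / ((n:ℝ)+1) ≤ q^(n+1) * x⁻¹ / 1 := by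
          apply div_le_div_of_nonneg_left (by positivity) (by norm_num) h1
      _ = q * x⁻¹ * q^n := by rw [div_one, h2]
  · exact summable_main hq0 hq1 hy

lemma summable_Fb {x : ℝ} (hx : x ∈ Set.Ioc (0:ℝ) (1/2)) :
    Summable (fun n => Fb q n x) := by
  exact (summable_main hq0 hq1 (by linarith [hx.1, hx.2] : (0:ℝ) < 1 - x)).sub
    (summable_main hq0 hq1 hx.1)

lemma partB : StrictConcaveOn ℝ (Set.Ioc 0 (1/2 : ℝ))
    (fun x => Real.log (qGamma q (1-x)) - Real.log (qGamma q x)) := by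
  set L := Real.log (1-q) with hL
  -- model
  have hmodel : StrictConcaveOn ℝ (Set.Ioc 0 (1/2 : ℝ))
      (fun x => (∑' n : ℕ, Fb q n x) + (-L + (2*L) * x)) := by
    have h1 : StrictConcaveOn ℝ (Set.Ioc 0 (1/2 : ℝ)) (fun x => ∑' n, Fb q n x) := by
      apply strictConcaveOn_tsum (fun n => ?_) (fun x hx => summable_Fb hq0 hq1 hx)
      have hc : (0:ℝ) < (((n:ℝ)+1) * (1 - q^(n+1)))⁻¹ := by
        have := upow_lt_one hq0 hq1 n
        have hn1 : (0:ℝ) < (n:ℝ)+1 := by positivity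
        have : (0:ℝ) < 1 - q^(n+1) := by linarith
        positivity
      exact ((aux2 (upow_pos hq0 hq1 n) (upow_lt_one hq0 hq1 n)).pos_smul hc).congr_on
        (fun x _ => Fb_eq hq0 hq1 n x)
    have h2 := h1.add_concaveOn (affine_concaveOn (convex_Ioc _ _) (-L) (2*L))
    exact h2.congr_on (fun x _ => by simp [Pi.add_apply])
  apply hmodel.congr_on
  intro x hx
  have hx1 : (0:ℝ) < 1 - x := by linarith [hx.2]
  rw [log_qGamma_eq hq0 hq1 hx1, log_qGamma_eq hq0 hq1 hx.1]
  have e3 : ∑' n : ℕ, Fb q n x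
      = (∑' n : ℕ, q ^ (((n:ℝ)+1)*(1-x)) / (((n:ℝ)+1)*(1-q^(n+1))))
        - ∑' n : ℕ, q ^ (((n:ℝ)+1)*x) / (((n:ℝ)+1)*(1-q^(n+1))) :=
    Summable.tsum_sub (summable_main hq0 hq1 hx1) (summable_main hq0 hq1 hx.1)
  rw [e3, ← hL]
  ring
end

section
include hq0 hq1

lemma partA : StrictConvexOn ℝ (Set.Ioc 0 (1/2 : ℝ))
    (fun x => Real.log (qGamma q ((1-x)/x))) := by
  set L := Real.log (1-q) with hL
  set C := Real.log (∏' i : ℕ, (1 - q ^ (i + 1))) with hC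
  have hmL : HasSum (fun n : ℕ => q^(n+1)/((n:ℝ)+1)) (-L) := by
    have h := Real.hasSum_pow_div_log_of_abs_lt_one (x := q) (by rwa [abs_of_pos hq0])
    convert h using 2 with n <;> push_cast <;> ring_nf
  have hmodel : StrictConvexOn ℝ (Set.Ioc 0 (1/2 : ℝ))
      (fun x => (∑' n : ℕ, Fa q n x) + ((C + 2*L) + 0 * x)) := by
    have h1 : StrictConvexOn ℝ (Set.Ioc 0 (1/2 : ℝ)) (fun x => ∑' n : ℕ, Fa q n x) := by
      apply strictConvexOn_tsum (fun n => ?_) (fun x hx => summable_Fa hq0 hq1 hx)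
      have hc : (0:ℝ) < ((n:ℝ)+1)⁻¹ := by positivity
      exact ((aux1 (upow_pos hq0 hq1 n) (upow_lt_one hq0 hq1 n)).pos_smul hc).congr_on
        (fun x hx => Fa_eq hq0 hq1 n (ne_of_gt hx.1))
    have h2 := h1.add_convexOn (affine_convexOn (convex_Ioc _ _) (C + 2*L) 0)
    exact h2.congr_on (fun x _ => by simp [Pi.add_apply])
  apply hmodel.congr_on
  intro x hx
  have hxpos := hx.1
  have hx0 : x ≠ 0 := ne_of_gt hxpos
  have hy : 0 < (1-x)/x := div_pos (by linarith [hx.2]) hxpos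
  rw [log_qGamma_eq hq0 hq1 hy, ← hC, ← hL]
  have e1 : ∑' n : ℕ, Fa q n x
      = (∑' n : ℕ, q^(n+1) * x⁻¹ / ((n:ℝ)+1))
        + ∑' n : ℕ, q ^ (((n:ℝ)+1)*((1-x)/x)) / (((n:ℝ)+1)*(1-q^(n+1))) := by
    apply Summable.tsum_add ?_ (summable_main hq0 hq1 hy)
    · apply (hmL.summable.mul_left x⁻¹).congr
      intro n
      ring
  have e2 : ∑' n : ℕ, q^(n+1) * x⁻¹ / ((n:ℝ)+1) = x⁻¹ * (-L) := by
    rw [← hmL.tsum_eq, ← tsum_mul_left]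
    congr 1
    funext n
    ring
  have e4 : (1 - (1-x)/x) = 2 - x⁻¹ := by
    field_simp
    ring
  rw [e1, e2, e4]
  ring
end


/-- x ↦ Γ_q((1-x)/x) is strictly log-convex and x ↦ Γ_q(1-x)/Γ_q(x)
is strictly log-concave on (0,1/2]. -/
theorem qGamma_ratio_logConvexity (q : ℝ) (hq0 : 0 < q) (hq1 : q < 1) :
    StrictConvexOn ℝ (Set.Ioc 0 (1 / 2))
      (fun x => Real.log (qGamma q ((1 - x) / x))) ∧
    StrictConcaveOn ℝ (Set.Ioc 0 (1 / 2))
      (fun x => Real.log (qGamma q (1 - x)) - Real.log (qGamma q x)) :=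
  ⟨partA hq0 hq1, partB hq0 hq1⟩
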